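/- For every real c > 3/2, the number x = (1/2)·√(3/(2c)) / cos((1/3)·arccos((3/(2c))^{3/2}) + 2π/3) satisfies −1 < x < 0 and 1/(2x²) − x = c; i.e. the unique solution of 1/(2x²) − x = c in (−1,0) is L_D(c) = (1/2)√(3/(2c)) sec((1/3) arccos((3/(2c))^{3/2}) + 2π/3). -/

import Mathlib

/-- For every `c > 3/2`, the number
`x = (1/2)√(3/(2c)) · sec((1/3) arccos((3/(2c))^{3/2}) + 2π/3)`
lies in `(−1, 0)` and solves `1/(2x²) − x = c`; i.e. it is the root
`L_D(c)` in `(−1,0)` for the rotating Kepler problem. -/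
theorem LD_explicit_formula (c : ℝ) (hc : 3/2 < c) :
    let x : ℝ := (1/2) * Real.sqrt (3/(2*c)) /
      Real.cos ((1/3) * Real.arccos ((3/(2*c)) ^ ((3:ℝ)/2)) + 2*Real.pi/3)
    (-1 < x ∧ x < 0) ∧ 1/(2*x^2) - x = c := by
  intro x
  have hc0 : (0:ℝ) < c := by linarith
  have ht : (0:ℝ) < 3/(2*c) := by positivity
  set r : ℝ := Real.sqrt (3/(2*c)) with hrdef
  have hr0 : 0 < r := Real.sqrt_pos.mpr ht
  have hr2 : r^2 = 3/(2*c) := Real.sq_sqrt ht.le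
  have hr2c : 2*c*r^2 = 3 := by
    rw [hr2]; field_simp
  have hr1 : r < 1 := by nlinarith
  have t32 : (3/(2*c)) ^ ((3:ℝ)/2) = r^3 := by
    have h1 : (3/(2*c)) ^ ((3:ℝ)/2) = ((3/(2*c)) ^ ((1:ℝ)/2))^(3:ℕ) := by
      rw [← Real.rpow_natCast ((3/(2*c)) ^ ((1:ℝ)/2)) 3, ← Real.rpow_mul ht.le]
      norm_num
    rw [h1, ← Real.sqrt_eq_rpow]
  have hcube0 : 0 < r^3 := by positivity
  have hcube1 : r^3 ≤ 1 := by nlinarith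
  set a : ℝ := Real.arccos (r^3) with hadef
  have hcosa : Real.cos a = r^3 := Real.cos_arccos (by nlinarith) hcube1
  have ha0 : 0 ≤ a := Real.arccos_nonneg _
  have hapi2 : a < Real.pi/2 := by
    rw [hadef, Real.arccos_lt_pi_div_two]; exact hcube0
  have hpi : 0 < Real.pi := Real.pi_pos
  set θ : ℝ := (1/3) * a + 2*Real.pi/3 with hθdef
  have hxdef : x = (1/2) * r / Real.cos θ := by
    show (1/2) * Real.sqrt (3/(2*c)) /
      Real.cos ((1/3) * Real.arccos ((3/(2*c)) ^ ((3:ℝ)/2)) + 2*Real.pi/3) = _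
    rw [t32, hθdef, hadef]
  set C : ℝ := Real.cos θ with hCdef
  -- bounds on θ
  have hθlb : 2*Real.pi/3 ≤ θ := by rw [hθdef]; linarith
  have hθub : θ < 5*Real.pi/6 := by rw [hθdef]; linarith
  -- C ≤ -1/2
  have hcos23 : Real.cos (2*Real.pi/3) = -(1/2) := by
    have : (2*Real.pi/3) = Real.pi - Real.pi/3 := by ring
    rw [this, Real.cos_pi_sub, Real.cos_pi_div_three]
  have hC : C ≤ -(1/2) := by
    have h56 : 5*Real.pi/6 ≤ Real.pi := by linarith
    have hθpi : θ ≤ Real.pi := le_trans hθub.le h56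
    have := Real.cos_le_cos_of_nonneg_of_le_pi (by positivity) hθpi hθlb
    rw [hcos23] at this; exact this
  have hCneg : C < 0 := by linarith
  have hCne : C ≠ 0 := ne_of_lt hCneg
  -- triple angle
  have h3θ : 3 * θ = a + 2*Real.pi := by rw [hθdef]; ring
  have key : 4*C^3 - 3*C = r^3 := by
    have h := Real.cos_three_mul θ
    rw [h3θ, Real.cos_add_two_pi, hcosa] at h
    rw [hCdef]; linarith
  -- bounds on x
  have hxneg : x < 0 := by
    rw [hxdef]
    exact div_neg_of_pos_of_neg (by positivity) hCneg
  have hxgt : -1 < x := by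
    rw [hxdef, lt_div_iff_of_neg hCneg]
    nlinarith
  refine ⟨⟨hxgt, hxneg⟩, ?_⟩
  have hxne : x ≠ 0 := ne_of_lt hxneg
  rw [hxdef]
  clear_value x C θ a r
  have hrne : r ≠ 0 := hr0.ne'
  field_simp
  ring_nf
  linear_combination key - C*hr2c
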